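/- arXiv:2011.12020 — 5 statements merged into one kernel-verified Lean document; each statement's English description precedes it below -/
import Mathlib

section
/- Let A be a C*-algebra and let φ be a weight on A that is lower semicontinuous, in the sense that for every net (a_j) of positive elements of A converging in norm to a positive element a one has φ(a) ≤ liminf_j φ(a_j). Let (e_i)_{i∈I} be an approximate identity for A indexed by a directed set I such that 0 ≤ e_i and ‖e_i‖ ≤ 1 for every i ∈ I, i.e. e_i·x → x in norm for every x ∈ A along the directed set I. Then for every positive a ∈ A one has φ(a) = sup_{i∈I} φ(a^{1/2} e_i a^{1/2}). -/
open scoped ENNReal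
open Filter

universe u

/-- Let `φ` be a lower semicontinuous weight on a C*-algebra `A`
(lower semicontinuity: for every net of positive elements converging in norm to a
positive element `a`, one has `φ a ≤ liminf φ (a_j)`).  If `(e i)_{i ∈ I}` is an
approximate identity of positive norm-at-most-one elements indexed by a directed
set `I`, then `φ a = ⨆ i, φ (a^{1/2} * e i * a^{1/2})` for every positive `a`. -/
theorem weight_eq_iSup_of_approximateIdentity
    {A : Type u} [CStarAlgebra A] [PartialOrder A] [StarOrderedRing A]
    (φ : A → ℝ≥0∞)
    (hadd : ∀ a b : A, 0 ≤ a → 0 ≤ b → φ (a + b) = φ a + φ b)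
    (hsmul : ∀ (r : ℝ) (a : A), 0 ≤ r → 0 ≤ a → φ (r • a) = ENNReal.ofReal r * φ a)
    (hlsc : ∀ {ι : Type u} [Preorder ι] [IsDirected ι (· ≤ ·)] [Nonempty ι]
      (s : ι → A) (a : A), (∀ j, 0 ≤ s j) → 0 ≤ a →
      Tendsto s atTop (nhds a) → φ a ≤ liminf (fun j => φ (s j)) atTop)
    {I : Type u} [Preorder I] [IsDirected I (· ≤ ·)] [Nonempty I]
    (e : I → A) (hpos : ∀ i, 0 ≤ e i) (hnorm : ∀ i, ‖e i‖ ≤ 1)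
    (happrox : ∀ x : A, Tendsto (fun i => e i * x) atTop (nhds x))
    (a : A) (ha : 0 ≤ a) :
    φ a = ⨆ i, φ (CFC.sqrt a * e i * CFC.sqrt a) := by
  have hsqrt : (0 : A) ≤ CFC.sqrt a := CFC.sqrt_nonneg a
  have hsa : star (CFC.sqrt a) = CFC.sqrt a := (IsSelfAdjoint.of_nonneg hsqrt).star_eq
  -- each term nonneg
  have hs : ∀ i, (0 : A) ≤ CFC.sqrt a * e i * CFC.sqrt a := fun i => by
    simpa [hsa] using star_left_conjugate_nonneg (hpos i) (CFC.sqrt a)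
  -- monotone on positives
  have hmono : ∀ x y : A, 0 ≤ x → x ≤ y → φ x ≤ φ y := fun x y hx hxy => by
    have : φ y = φ x + φ (y - x) := by
      rw [← hadd x (y - x) hx (sub_nonneg.2 hxy), add_sub_cancel]
    rw [this]; exact le_self_add
  -- each term ≤ φ a
  have hle : ∀ i, φ (CFC.sqrt a * e i * CFC.sqrt a) ≤ φ a := fun i => by
    have h1 : e i ≤ 1 := (CStarAlgebra.norm_le_one_iff_of_nonneg (e i) (hpos i)).1 (hnorm i)
    have : CFC.sqrt a * e i * CFC.sqrt a ≤ CFC.sqrt a * 1 * CFC.sqrt a := by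
      simpa [hsa] using star_left_conjugate_le_conjugate h1 (CFC.sqrt a)
    rw [mul_one, CFC.sqrt_mul_sqrt_self a ha] at this
    exact hmono _ _ (hs i) this
  refine le_antisymm ?_ (iSup_le hle)
  -- convergence
  have htend : Tendsto (fun i => CFC.sqrt a * e i * CFC.sqrt a) atTop (nhds a) := by
    have := (happrox (CFC.sqrt a)).const_mul (CFC.sqrt a)
    simp only [mul_assoc]
    simpa [CFC.sqrt_mul_sqrt_self a ha] using this
  calc φ a ≤ liminf (fun i => φ (CFC.sqrt a * e i * CFC.sqrt a)) atTop :=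
        hlsc _ a hs ha htend
    _ ≤ limsup (fun i => φ (CFC.sqrt a * e i * CFC.sqrt a)) atTop := liminf_le_limsup
    _ ≤ ⨆ i, φ (CFC.sqrt a * e i * CFC.sqrt a) := limsup_le_iSup
end

section
/- Let X and Y be locally compact Hausdorff spaces, let π : Y → X be a continuous open surjection, and let (α_x)_{x∈X} be a continuous π-system of measures. Then for every nonnegative function f ∈ C₀(Y), the function x ↦ ∫⁻ f dα_x (Lebesgue integral with values in [0,∞]) is lower semicontinuous on X. -/
open scoped ENNReal ZeroAtInfty
open MeasureTheory

/-- Let `π : Y → X` be a continuous open surjection between locally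
compact Hausdorff spaces, and let `(α x)_{x ∈ X}` be a continuous `π`-system of
(Radon) measures: each `α x` is a regular Borel measure concentrated on the fibre
`π⁻¹(x)`, and `x ↦ ∫ f dα_x` is continuous for every continuous compactly supported
`f : Y → ℝ`.  Then for every nonnegative `f ∈ C₀(Y)` the function
`x ↦ ∫⁻ f dα_x` is lower semicontinuous on `X`. -/
theorem lowerSemicontinuous_lintegral_of_continuous_pi_system
    {X Y : Type*} [TopologicalSpace X] [LocallyCompactSpace X] [T2Space X]
    [TopologicalSpace Y] [LocallyCompactSpace Y] [T2Space Y]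
    [MeasurableSpace Y] [BorelSpace Y]
    (π : Y → X) (hπ : Continuous π) (hopen : IsOpenMap π) (hsurj : Function.Surjective π)
    (α : X → Measure Y)
    (hRadon : ∀ x, (α x).Regular)
    (hconc : ∀ x, α x (π ⁻¹' {x})ᶜ = 0)
    (hcont : ∀ f : Y → ℝ, Continuous f → HasCompactSupport f →
      Continuous fun x => ∫ y, f y ∂α x)
    (f : C₀(Y, ℝ)) (hf : ∀ y, 0 ≤ f y) :
    LowerSemicontinuous fun x => ∫⁻ y, ENNReal.ofReal (f y) ∂α x := by
  set g : ℕ → Y → ℝ := fun n y => max (f y - (1 : ℝ) / (n + 1)) 0 with hg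
  have hgc : ∀ n, Continuous (g n) := fun n =>
    ((map_continuous f).sub continuous_const).max continuous_const
  have hgsupp : ∀ n, HasCompactSupport (g n) := by
    intro n
    have hε : (0 : ℝ) < 1 / (n + 1) := by positivity
    have hmem : {y | f y < 1 / (n + 1)} ∈ Filter.cocompact Y :=
      (zero_at_infty f) (Iio_mem_nhds hε)
    obtain ⟨K, hK, hKsub⟩ := Filter.mem_cocompact.mp hmem
    refine HasCompactSupport.intro hK fun y hy => ?_
    have : f y < 1 / (n + 1) := hKsub hy
    simp only [hg, max_eq_right (by linarith : f y - 1 / (n + 1) ≤ 0)]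
  have hmono : ∀ y, Monotone fun n => ENNReal.ofReal (g n y) := by
    intro y n m hnm
    apply ENNReal.ofReal_le_ofReal
    apply max_le_max _ le_rfl
    have : (1 : ℝ) / (m + 1) ≤ 1 / (n + 1) := by
      apply one_div_le_one_div_of_le (by positivity)
      exact_mod_cast by omega
    linarith
  have htend : ∀ y, Filter.Tendsto (fun n => g n y) Filter.atTop (nhds (f y)) := by
    intro y
    have h1 : Filter.Tendsto (fun n : ℕ => (1 : ℝ) / (n + 1)) Filter.atTop (nhds 0) :=
      tendsto_one_div_add_atTop_nhds_zero_nat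
    have := (Filter.Tendsto.sub (tendsto_const_nhds (x := f y)) h1).max
      (tendsto_const_nhds (x := (0 : ℝ)))
    simpa [hg, one_div, max_eq_left (hf y)] using this
  have hsup : ∀ y, (⨆ n, ENNReal.ofReal (g n y)) = ENNReal.ofReal (f y) := by
    intro y
    refine tendsto_nhds_unique (tendsto_atTop_iSup (hmono y)) ?_
    exact (ENNReal.continuous_ofReal.tendsto (f y)).comp (htend y)
  have key : (fun x => ∫⁻ y, ENNReal.ofReal (f y) ∂α x)
      = fun x => ⨆ n, ∫⁻ y, ENNReal.ofReal (g n y) ∂α x := by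
    funext x
    rw [← lintegral_iSup (fun n => ((hgc n).measurable).ennreal_ofReal)
      (fun n m hnm => fun y => hmono y hnm)]
    exact lintegral_congr fun y => (hsup y).symm
  rw [key]
  apply lowerSemicontinuous_iSup
  intro n
  have hInt : ∀ x, Integrable (g n) (α x) := by
    intro x
    haveI := hRadon x
    exact (hgc n).integrable_of_hasCompactSupport (hgsupp n)
  have heq : (fun x => ∫⁻ y, ENNReal.ofReal (g n y) ∂α x)
      = fun x => ENNReal.ofReal (∫ y, g n y ∂α x) := by
    funext x
    rw [← ofReal_integral_eq_lintegral_ofReal (hInt x)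
      (Filter.Eventually.of_forall fun y => le_max_right _ _)]
  rw [heq]
  exact (ENNReal.continuous_ofReal.comp (hcont (g n) (hgc n) (hgsupp n))).lowerSemicontinuous
end

section
/- Let X and Y be locally compact Hausdorff spaces, let π : Y → X be a continuous open surjection, and let (α_x)_{x∈X} be a continuous π-system of measures. For every nonnegative f ∈ C₀(Y) define Φ(f) : X → [0,∞] by Φ(f)(x) = ∫⁻ f dα_x. Then: (a) for every nonnegative f ∈ C₀(Y), Φ(f) is lower semicontinuous on X; (b) Φ(f+g) = Φ(f) + Φ(g) for all nonnegative f, g ∈ C₀(Y); (c) for every nonnegative h ∈ C₀(X) and nonnegative f ∈ C₀(Y), Φ((h∘π)·f) = h·Φ(f) pointwise on X; (d) for every nonnegative continuous compactly supported f on Y, Φ(f) is finite-valued and continuous on X; (e) if nonnegative functions f_n ∈ C₀(Y) converge uniformly to f ∈ C₀(Y), then Φ(f)(x) ≤ liminf_n Φ(f_n)(x) for every x ∈ X. -/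
open scoped ENNReal ZeroAtInfty
open MeasureTheory Filter

/-- Let `π : Y → X` be a continuous open surjection between locally
compact Hausdorff spaces, and let `(α x)_{x ∈ X}` be a continuous `π`-system of Radon
measures.  Define `Φ f x = ∫⁻ f dα_x` for nonnegative `f ∈ C₀(Y)`.  Then:
(a) each `Φ f` is lower semicontinuous; (b) `Φ` is additive; (c) `Φ((h∘π)·f) = h·Φ f`
for nonnegative `h ∈ C₀(X)`; (d) `Φ f` is finite-valued and continuous for `f`
continuous nonnegative with compact support; (e) `Φ` is lower semicontinuous with
respect to uniform convergence. -/
theorem continuous_pi_system_weight_properties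
    {X Y : Type*} [TopologicalSpace X] [LocallyCompactSpace X] [T2Space X]
    [TopologicalSpace Y] [LocallyCompactSpace Y] [T2Space Y]
    [MeasurableSpace Y] [BorelSpace Y]
    (π : Y → X) (hπ : Continuous π) (hopen : IsOpenMap π) (hsurj : Function.Surjective π)
    (α : X → Measure Y)
    (hRadon : ∀ x, (α x).Regular)
    (hconc : ∀ x, α x (π ⁻¹' {x})ᶜ = 0)
    (hcont : ∀ f : Y → ℝ, Continuous f → HasCompactSupport f →
      Continuous fun x => ∫ y, f y ∂α x) :
    -- (a)
    (∀ f : C₀(Y, ℝ), (∀ y, 0 ≤ f y) →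
      LowerSemicontinuous fun x => ∫⁻ y, ENNReal.ofReal (f y) ∂α x) ∧
    -- (b)
    (∀ f g : C₀(Y, ℝ), (∀ y, 0 ≤ f y) → (∀ y, 0 ≤ g y) → ∀ x,
      ∫⁻ y, ENNReal.ofReal ((f + g) y) ∂α x =
        (∫⁻ y, ENNReal.ofReal (f y) ∂α x) + ∫⁻ y, ENNReal.ofReal (g y) ∂α x) ∧
    -- (c)
    (∀ h : C₀(X, ℝ), (∀ x, 0 ≤ h x) → ∀ f : C₀(Y, ℝ), (∀ y, 0 ≤ f y) → ∀ x,
      ∫⁻ y, ENNReal.ofReal (h (π y) * f y) ∂α x =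
        ENNReal.ofReal (h x) * ∫⁻ y, ENNReal.ofReal (f y) ∂α x) ∧
    -- (d)
    (∀ f : Y → ℝ, Continuous f → HasCompactSupport f → (∀ y, 0 ≤ f y) →
      (∀ x, (∫⁻ y, ENNReal.ofReal (f y) ∂α x) ≠ ∞) ∧
        Continuous fun x => ∫⁻ y, ENNReal.ofReal (f y) ∂α x) ∧
    -- (e)
    (∀ (fn : ℕ → C₀(Y, ℝ)) (f : C₀(Y, ℝ)), (∀ n y, 0 ≤ fn n y) → (∀ y, 0 ≤ f y) →
      TendstoUniformly (fun n y => fn n y) (fun y => f y) atTop → ∀ x,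
      (∫⁻ y, ENNReal.ofReal (f y) ∂α x) ≤
        liminf (fun n => ∫⁻ y, ENNReal.ofReal (fn n y) ∂α x) atTop) := by
  -- measurability helper
  have hmeas : ∀ (f : Y → ℝ), Continuous f → Measurable fun y => ENNReal.ofReal (f y) :=
    fun f hf => ENNReal.measurable_ofReal.comp hf.measurable
  -- part (d)
  have partD : ∀ f : Y → ℝ, Continuous f → HasCompactSupport f → (∀ y, 0 ≤ f y) →
      (∀ x, (∫⁻ y, ENNReal.ofReal (f y) ∂α x) ≠ ∞) ∧
        Continuous fun x => ∫⁻ y, ENNReal.ofReal (f y) ∂α x := by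
    intro f hf hsupp hpos
    have hint : ∀ x, Integrable f (α x) := fun x => by
      haveI := (hRadon x).toIsFiniteMeasureOnCompacts
      exact hf.integrable_of_hasCompactSupport hsupp
    have key : ∀ x, ∫⁻ y, ENNReal.ofReal (f y) ∂α x = ENNReal.ofReal (∫ y, f y ∂α x) :=
      fun x => (MeasureTheory.ofReal_integral_eq_lintegral_ofReal (hint x)
        (Eventually.of_forall hpos)).symm
    refine ⟨fun x => by rw [key x]; exact ENNReal.ofReal_ne_top, ?_⟩
    have : Continuous fun x => ENNReal.ofReal (∫ y, f y ∂α x) :=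
      ENNReal.continuous_ofReal.comp (hcont f hf hsupp)
    simpa only [key] using this
  -- approximation by compactly supported functions
  have approx : ∀ f : C₀(Y, ℝ), (∀ y, 0 ≤ f y) →
      ∃ g : ℕ → Y → ℝ,
        (∀ n, g n = fun y => max (f y - ((n : ℝ) + 1)⁻¹) 0) ∧
        (∀ n, Continuous (g n)) ∧ (∀ n, HasCompactSupport (g n)) ∧
        (∀ n y, 0 ≤ g n y) ∧
        (Monotone fun n => fun y => ENNReal.ofReal (g n y)) ∧
        (∀ y, (⨆ n, ENNReal.ofReal (g n y)) = ENNReal.ofReal (f y)) := by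
    intro f hf
    refine ⟨fun n y => max (f y - ((n : ℝ) + 1)⁻¹) 0, fun n => rfl, ?_, ?_, ?_, ?_, ?_⟩
    · exact fun n => (f.continuous.sub continuous_const).max continuous_const
    · intro n
      -- support is contained in the compact set {y | (n+1)⁻¹ ≤ |f y|}
      have hε : (0 : ℝ) < ((n : ℝ) + 1)⁻¹ := by positivity
      have hz : Tendsto (fun y => f y) (cocompact Y) (nhds 0) := f.zero_at_infty'
      have hmem : {y : Y | |f y| < ((n : ℝ) + 1)⁻¹} ∈ cocompact Y := by
        have := hz (Metric.ball_mem_nhds (0 : ℝ) hε)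
        simpa [Metric.mem_ball, Real.dist_eq, Set.preimage] using this
      obtain ⟨K, hK, hKsub⟩ := mem_cocompact.1 hmem
      have hclosed : IsClosed {y : Y | ((n : ℝ) + 1)⁻¹ ≤ |f y|} :=
        isClosed_le continuous_const f.continuous.abs
      have hsub : {y : Y | ((n : ℝ) + 1)⁻¹ ≤ |f y|} ⊆ K := by
        intro y hy
        by_contra hyK
        exact absurd (hKsub hyK) (by simpa using not_lt.2 hy)
      have hcpt : IsCompact {y : Y | ((n : ℝ) + 1)⁻¹ ≤ |f y|} :=
        hK.of_isClosed_subset hclosed hsub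
      apply HasCompactSupport.intro hcpt
      intro y hy
      have : f y < ((n : ℝ) + 1)⁻¹ := by
        have : ¬ ((n : ℝ) + 1)⁻¹ ≤ |f y| := hy
        have := not_le.1 this
        calc f y ≤ |f y| := le_abs_self _
        _ < _ := this
      simp [max_eq_right, sub_nonpos.2 this.le]
    · intro n y; exact le_max_right _ _
    · intro m n hmn
      intro y
      apply ENNReal.ofReal_le_ofReal
      apply max_le_max _ le_rfl
      have : ((n : ℝ) + 1)⁻¹ ≤ ((m : ℝ) + 1)⁻¹ := by
        apply inv_anti₀ (by positivity)
        have : (m : ℝ) ≤ n := Nat.cast_le.2 hmn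
        linarith
      linarith
    · intro y
      have hmono : Monotone fun n : ℕ => ENNReal.ofReal (max (f y - ((n : ℝ) + 1)⁻¹) 0) := by
        intro m n hmn
        apply ENNReal.ofReal_le_ofReal
        apply max_le_max _ le_rfl
        have : ((n : ℝ) + 1)⁻¹ ≤ ((m : ℝ) + 1)⁻¹ := by
          apply inv_anti₀ (by positivity)
          have : (m : ℝ) ≤ n := Nat.cast_le.2 hmn
          linarith
        linarith
      have htend : Tendsto (fun n : ℕ => ENNReal.ofReal (max (f y - ((n : ℝ) + 1)⁻¹) 0))
          atTop (nhds (ENNReal.ofReal (f y))) := by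
        have h1 : Tendsto (fun n : ℕ => ((n : ℝ) + 1)⁻¹) atTop (nhds 0) :=
          tendsto_one_div_add_atTop_nhds_zero_nat.congr (by intro n; simp [one_div])
        have h2 : Tendsto (fun n : ℕ => max (f y - ((n : ℝ) + 1)⁻¹) 0) atTop
            (nhds (max (f y - 0) 0)) :=
          ((tendsto_const_nhds.sub h1).max tendsto_const_nhds)
        have h3 : max (f y - 0) 0 = f y := by simp [max_eq_left (hf y)]
        rw [h3] at h2
        exact ENNReal.continuous_ofReal.continuousAt.tendsto.comp h2
      exact tendsto_nhds_unique (tendsto_atTop_iSup hmono) htend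
  -- the key monotone-convergence identity
  have keyMC : ∀ (f : C₀(Y, ℝ)) (hf : ∀ y, 0 ≤ f y) (g : ℕ → Y → ℝ),
      (∀ n, Continuous (g n)) →
      (Monotone fun n => fun y => ENNReal.ofReal (g n y)) →
      (∀ y, (⨆ n, ENNReal.ofReal (g n y)) = ENNReal.ofReal (f y)) →
      ∀ x, ∫⁻ y, ENNReal.ofReal (f y) ∂α x = ⨆ n, ∫⁻ y, ENNReal.ofReal (g n y) ∂α x := by
    intro f hf g hgc hmono hsup x
    rw [← MeasureTheory.lintegral_iSup (fun n => hmeas _ (hgc n)) hmono]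
    exact lintegral_congr fun y => (hsup y).symm
  refine ⟨?_, ?_, ?_, partD, ?_⟩
  · -- (a)
    intro f hf
    obtain ⟨g, _, hgc, hgs, hgpos, hmono, hsup⟩ := approx f hf
    have : LowerSemicontinuous fun x => ⨆ n, ∫⁻ y, ENNReal.ofReal (g n y) ∂α x :=
      lowerSemicontinuous_iSup fun n =>
        ((partD (g n) (hgc n) (hgs n) (hgpos n)).2).lowerSemicontinuous
    have heq : (fun x => ∫⁻ y, ENNReal.ofReal (f y) ∂α x)
        = fun x => ⨆ n, ∫⁻ y, ENNReal.ofReal (g n y) ∂α x :=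
      funext (keyMC f hf g hgc hmono hsup)
    rw [heq]
    exact this
  · -- (b)
    intro f g hf hg x
    have : ∀ y, ENNReal.ofReal ((f + g) y) = ENNReal.ofReal (f y) + ENNReal.ofReal (g y) := by
      intro y
      have : (f + g) y = f y + g y := rfl
      rw [this, ENNReal.ofReal_add (hf y) (hg y)]
    simp_rw [this]
    try exact lintegral_add_left (hmeas _ f.continuous) _
  · -- (c)
    intro h hh f hf x
    have hae : ∀ᵐ y ∂α x, π y = x := by
      have hset : {y | ¬ π y = x} = (π ⁻¹' {x})ᶜ := by ext y; simp
      rw [MeasureTheory.ae_iff, hset]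
      exact hconc x
    calc ∫⁻ y, ENNReal.ofReal (h (π y) * f y) ∂α x
        = ∫⁻ y, ENNReal.ofReal (h x) * ENNReal.ofReal (f y) ∂α x := by
          apply lintegral_congr_ae
          filter_upwards [hae] with y hy
          rw [hy, ENNReal.ofReal_mul (hh x)]
      _ = ENNReal.ofReal (h x) * ∫⁻ y, ENNReal.ofReal (f y) ∂α x :=
          lintegral_const_mul' _ _ ENNReal.ofReal_ne_top
  · -- (e)
    intro fn f hfn hf hunif x
    obtain ⟨g, hgdef, hgc, hgs, hgpos, hmono, hsup⟩ := approx f hf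
    rw [keyMC f hf g hgc hmono hsup x]
    apply iSup_le
    intro n
    apply Filter.le_liminf_of_le (by isBoundedDefault)
    have hev : ∀ᶠ m in atTop, ∀ y, dist (f y) (fn m y) < ((n : ℝ) + 1)⁻¹ := by
      have := Metric.tendstoUniformly_iff.1 hunif (((n : ℝ) + 1)⁻¹) (by positivity)
      exact this
    filter_upwards [hev] with m hm
    apply lintegral_mono
    intro y
    apply ENNReal.ofReal_le_ofReal
    rw [hgdef n]
    apply max_le _ (hfn m y)
    have := hm y
    rw [Real.dist_eq] at this
    have h1 : f y - fn m y < ((n : ℝ) + 1)⁻¹ := lt_of_le_of_lt (le_abs_self _) this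
    linarith
end

section
/- Let Y be a locally compact Hausdorff space and let φ be a map from the nonnegative elements of C₀(Y) to [0,∞] such that: (i) φ(f+g) = φ(f) + φ(g) for all nonnegative f, g ∈ C₀(Y); (ii) φ(λf) = λφ(f) for all real λ ≥ 0 (with 0·∞ = 0); (iii) φ is lower semicontinuous: whenever nonnegative functions f_n ∈ C₀(Y) converge uniformly to f ∈ C₀(Y), one has φ(f) ≤ liminf_n φ(f_n); (iv) φ is densely defined: the set {f ∈ C₀(Y) : f ≥ 0 and φ(f) < ∞} is dense in the set of nonnegative elements of C₀(Y) for the uniform norm. Then there exists a unique Radon measure μ on Y such that φ(f) = ∫⁻ f dμ for every nonnegative f ∈ C₀(Y). -/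
open scoped ENNReal ZeroAtInfty
open MeasureTheory Filter TopologicalSpace Set Topology

namespace RMKW

variable {Y : Type*} [TopologicalSpace Y]

/-- Compose a `C₀` function with a continuous real map fixing `0`. -/
noncomputable def comp0 (ψ : ℝ → ℝ) (hψ : Continuous ψ) (h0 : ψ 0 = 0) (f : C₀(Y, ℝ)) :
    C₀(Y, ℝ) where
  toFun := fun y => ψ (f y)
  continuous_toFun := hψ.comp f.continuous
  zero_at_infty' := by
    have := (hψ.tendsto 0).comp f.zero_at_infty'
    rwa [h0] at this

@[simp] lemma comp0_apply (ψ : ℝ → ℝ) (hψ : Continuous ψ) (h0 : ψ 0 = 0) (f : C₀(Y, ℝ))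
    (y : Y) : comp0 ψ hψ h0 f y = ψ (f y) := rfl

/-- A compactly supported continuous function as a `C₀` function. -/
noncomputable def ofCS (f : C(Y, ℝ)) (hf : HasCompactSupport f) : C₀(Y, ℝ) where
  toFun := f
  continuous_toFun := f.continuous
  zero_at_infty' := hf.is_zero_at_infty

@[simp] lemma ofCS_apply (f : C(Y, ℝ)) (hf : HasCompactSupport f) (y : Y) :
    ofCS f hf y = f y := rfl

lemma level_compact (f : C₀(Y, ℝ)) {c : ℝ} (hc : 0 < c) : IsCompact {y | c ≤ f y} := by
  have hcl : IsClosed {y | c ≤ f y} := isClosed_le continuous_const f.continuous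
  obtain ⟨C, hC, hsub⟩ := (Filter.hasBasis_cocompact.tendsto_left_iff.mp f.zero_at_infty'
    (Metric.ball 0 c) (Metric.ball_mem_nhds 0 hc))
  refine hC.of_isClosed_subset hcl ?_
  intro y hy
  by_contra hyC
  have := hsub (by simpa using hyC)
  simp only [Metric.mem_ball, Real.dist_eq, sub_zero] at this
  have : f y < c := lt_of_abs_lt this
  exact absurd hy (by simpa using not_le.mpr this)

lemma clamp_sum (c : ℝ) (N : ℕ) (t : ℝ) (ht : 0 ≤ t) (hct : 0 ≤ c * t) :
    ∑ j ∈ Finset.range N, min (max (c * t - j) 0) 1 = min (c * t) N := by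
  induction N with
  | zero => simp [min_eq_right hct]
  | succ N ih =>
      rw [Finset.sum_range_succ, ih]
      push_cast
      rcases le_total (c * t) N with h | h
      · rw [min_eq_left h, min_eq_left (h.trans (by linarith)),
          max_eq_right (by linarith)]
        simp
      · rw [min_eq_right h, max_eq_left (by linarith)]
        rcases le_total (c * t) (N + 1) with h2 | h2
        · rw [min_eq_left h2, min_eq_left (by linarith)]; ring
        · rw [min_eq_right h2, min_eq_right (by linarith)]


section core
variable (φ : C₀(Y, ℝ) → ℝ≥0∞)

/-- Admissible functions for a set `K`: nonnegative, `≥ 1` on `K`. -/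
def Adm (K : Set Y) : Set C₀(Y, ℝ) := {f | (∀ y, 0 ≤ f y) ∧ ∀ x ∈ K, 1 ≤ f x}

noncomputable def lam (K : Set Y) : ℝ≥0∞ := ⨅ f ∈ Adm K, φ f

lemma lam_le {K : Set Y} {f : C₀(Y, ℝ)} (h : f ∈ Adm K) : lam φ K ≤ φ f := iInf₂_le f h

lemma le_lam {K : Set Y} {c : ℝ≥0∞} (h : ∀ f ∈ Adm K, c ≤ φ f) : c ≤ lam φ K := le_iInf₂ h

lemma lam_mono {K K' : Set Y} (h : K ⊆ K') : lam φ K ≤ lam φ K' :=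
  le_lam φ fun f hf => lam_le φ ⟨hf.1, fun x hx => hf.2 x (h hx)⟩

variable {φ}

lemma phi_mono (hadd : ∀ f g : C₀(Y, ℝ), (∀ y, 0 ≤ f y) → (∀ y, 0 ≤ g y) →
      φ (f + g) = φ f + φ g)
    {f g : C₀(Y, ℝ)} (hf : ∀ y, 0 ≤ f y) (hle : ∀ y, f y ≤ g y) : φ f ≤ φ g := by
  have hgf : ∀ y, 0 ≤ (g - f) y := by
    intro y
    have : (g - f) y = g y - f y := rfl
    rw [this]; linarith [hle y]
  have : f + (g - f) = g := by abel
  calc φ f ≤ φ f + φ (g - f) := le_self_add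
  _ = φ (f + (g - f)) := (hadd f (g - f) hf hgf).symm
  _ = φ g := by rw [this]

lemma phi_zero (hsmul : ∀ (r : ℝ) (f : C₀(Y, ℝ)), 0 ≤ r → (∀ y, 0 ≤ f y) →
      φ (r • f) = ENNReal.ofReal r * φ f) : φ 0 = 0 := by
  have h := hsmul 0 0 le_rfl (fun y => le_rfl)
  simpa using h

variable [LocallyCompactSpace Y] [T2Space Y]

lemma lam_ne_top
    (hsmul : ∀ (r : ℝ) (f : C₀(Y, ℝ)), 0 ≤ r → (∀ y, 0 ≤ f y) →
      φ (r • f) = ENNReal.ofReal r * φ f)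
    (hdense : ∀ f : C₀(Y, ℝ), (∀ y, 0 ≤ f y) →
      f ∈ closure {g : C₀(Y, ℝ) | (∀ y, 0 ≤ g y) ∧ φ g < ∞})
    {K : Set Y} (hK : IsCompact K) : lam φ K ≠ ∞ := by
  obtain ⟨χ, hχK, -, hχcs, hχ01⟩ :=
    exists_continuous_one_zero_of_isCompact hK isClosed_empty (disjoint_empty K)
  set χ₀ : C₀(Y, ℝ) := ofCS χ hχcs with hχ₀
  have hχpos : ∀ y, 0 ≤ χ₀ y := fun y => by exact (hχ01 y).1
  have := hdense χ₀ hχpos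
  rw [Metric.mem_closure_iff] at this
  obtain ⟨g, hgS, hgd⟩ := this (1 / 2) (by norm_num)
  have hkey : (2 : ℝ) • g ∈ Adm K := by
    constructor
    · intro y
      have := hgS.1 y
      have h2 : ((2 : ℝ) • g) y = 2 * g y := rfl
      rw [h2]; linarith
    · intro x hx
      have hd : dist (χ₀ x) (g x) ≤ dist χ₀ g := by
        calc dist (χ₀ x) (g x) = dist (χ₀.toBCF x) (g.toBCF x) := rfl
        _ ≤ dist χ₀.toBCF g.toBCF := BoundedContinuousFunction.dist_coe_le_dist x
        _ = dist χ₀ g := ZeroAtInftyContinuousMap.dist_toBCF_eq_dist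
      have hχx : χ₀ x = 1 := by exact hχK hx
      rw [Real.dist_eq, hχx] at hd
      have : |1 - g x| < 1 / 2 := lt_of_le_of_lt hd hgd
      have h2 : ((2 : ℝ) • g) x = 2 * g x := rfl
      rw [h2]
      rcases abs_lt.mp this with ⟨-, h1⟩
      linarith
  have : lam φ K ≤ φ ((2 : ℝ) • g) := lam_le φ hkey
  rw [hsmul 2 g (by norm_num) hgS.1] at this
  exact ne_top_of_le_ne_top (ENNReal.mul_ne_top ENNReal.ofReal_ne_top hgS.2.ne) this

lemma lam_exists_lt
    (hsmul : ∀ (r : ℝ) (f : C₀(Y, ℝ)), 0 ≤ r → (∀ y, 0 ≤ f y) →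
      φ (r • f) = ENNReal.ofReal r * φ f)
    (hdense : ∀ f : C₀(Y, ℝ), (∀ y, 0 ≤ f y) →
      f ∈ closure {g : C₀(Y, ℝ) | (∀ y, 0 ≤ g y) ∧ φ g < ∞})
    {K : Set Y} (hK : IsCompact K) {ε : ℝ≥0∞} (hε : ε ≠ 0) :
    ∃ f ∈ Adm K, φ f < lam φ K + ε := by
  by_contra hc
  push_neg at hc
  have : lam φ K + ε ≤ lam φ K := le_lam φ hc
  have hlt : lam φ K < lam φ K + ε :=
    ENNReal.lt_add_right (lam_ne_top hsmul hdense hK) hε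
  exact absurd (hlt.trans_le this) (lt_irrefl _)

lemma lam_union_le
    (hadd : ∀ f g : C₀(Y, ℝ), (∀ y, 0 ≤ f y) → (∀ y, 0 ≤ g y) →
      φ (f + g) = φ f + φ g)
    (hsmul : ∀ (r : ℝ) (f : C₀(Y, ℝ)), 0 ≤ r → (∀ y, 0 ≤ f y) →
      φ (r • f) = ENNReal.ofReal r * φ f)
    (hdense : ∀ f : C₀(Y, ℝ), (∀ y, 0 ≤ f y) →
      f ∈ closure {g : C₀(Y, ℝ) | (∀ y, 0 ≤ g y) ∧ φ g < ∞})
    {K₁ K₂ : Set Y} (hK₁ : IsCompact K₁) (hK₂ : IsCompact K₂) :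
    lam φ (K₁ ∪ K₂) ≤ lam φ K₁ + lam φ K₂ := by
  refine ENNReal.le_of_forall_pos_le_add fun ε hε _ => ?_
  have hε2 : ((ε : ℝ≥0∞) / 2) ≠ 0 := by
    simp only [ne_eq, ENNReal.div_eq_zero_iff, ENNReal.coe_eq_zero, hε.ne', false_or]
    norm_num
  obtain ⟨f₁, hf₁, hφ₁⟩ := lam_exists_lt hsmul hdense hK₁ hε2
  obtain ⟨f₂, hf₂, hφ₂⟩ := lam_exists_lt hsmul hdense hK₂ hε2
  have hmem : f₁ + f₂ ∈ Adm (K₁ ∪ K₂) := by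
    constructor
    · intro y
      have : (f₁ + f₂) y = f₁ y + f₂ y := rfl
      rw [this]
      exact add_nonneg (hf₁.1 y) (hf₂.1 y)
    · intro x hx
      have h : (f₁ + f₂) x = f₁ x + f₂ x := rfl
      rcases hx with hx | hx
      · rw [h]; linarith [hf₁.2 x hx, hf₂.1 x]
      · rw [h]; linarith [hf₂.2 x hx, hf₁.1 x]
  calc lam φ (K₁ ∪ K₂) ≤ φ (f₁ + f₂) := lam_le φ hmem
  _ = φ f₁ + φ f₂ := hadd f₁ f₂ hf₁.1 hf₂.1
  _ ≤ (lam φ K₁ + ε / 2) + (lam φ K₂ + ε / 2) := add_le_add hφ₁.le hφ₂.le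
  _ = lam φ K₁ + lam φ K₂ + (ε / 2 + ε / 2) := by ring
  _ = lam φ K₁ + lam φ K₂ + ε := by rw [ENNReal.add_halves]

lemma lam_union_disjoint
    (hadd : ∀ f g : C₀(Y, ℝ), (∀ y, 0 ≤ f y) → (∀ y, 0 ≤ g y) →
      φ (f + g) = φ f + φ g)
    {K₁ K₂ : Set Y} (hK₁ : IsCompact K₁) (hK₂ : IsCompact K₂)
    (hd : Disjoint K₁ K₂) :
    lam φ K₁ + lam φ K₂ ≤ lam φ (K₁ ∪ K₂) := by
  obtain ⟨χ, hχ1, hχ0, hχcs, hχ01⟩ :=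
    exists_continuous_one_zero_of_isCompact hK₁ hK₂.isClosed hd
  set g : C₀(Y, ℝ) := ofCS χ hχcs with hg
  refine le_lam φ fun f hf => ?_
  set p : C₀(Y, ℝ) := f * g with hp
  set q : C₀(Y, ℝ) := f - p with hq
  have hpv : ∀ y, p y = f y * χ y := fun y => rfl
  have hqv : ∀ y, q y = f y - f y * χ y := fun y => rfl
  have hppos : ∀ y, 0 ≤ p y := fun y => by
    rw [hpv y]; exact mul_nonneg (hf.1 y) (hχ01 y).1
  have hqpos : ∀ y, 0 ≤ q y := fun y => by
    rw [hqv y]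
    have h1 : f y * χ y ≤ f y * 1 := mul_le_mul_of_nonneg_left (hχ01 y).2 (hf.1 y)
    linarith
  have hpmem : p ∈ Adm K₁ := by
    refine ⟨hppos, fun x hx => ?_⟩
    rw [hpv x, show χ x = 1 from hχ1 hx]
    simpa using hf.2 x (Or.inl hx)
  have hqmem : q ∈ Adm K₂ := by
    refine ⟨hqpos, fun x hx => ?_⟩
    rw [hqv x, show χ x = 0 from hχ0 hx]
    simpa using hf.2 x (Or.inr hx)
  have hsum : p + q = f := by rw [hq]; abel
  calc lam φ K₁ + lam φ K₂ ≤ φ p + φ q := add_le_add (lam_le φ hpmem) (lam_le φ hqmem)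
  _ = φ (p + q) := (hadd p q hppos hqpos).symm
  _ = φ f := by rw [hsum]

lemma lam_nbhd_le
    (hsmul : ∀ (r : ℝ) (f : C₀(Y, ℝ)), 0 ≤ r → (∀ y, 0 ≤ f y) →
      φ (r • f) = ENNReal.ofReal r * φ f)
    (hdense : ∀ f : C₀(Y, ℝ), (∀ y, 0 ≤ f y) →
      f ∈ closure {g : C₀(Y, ℝ) | (∀ y, 0 ≤ g y) ∧ φ g < ∞})
    {K : Set Y} (hK : IsCompact K) :
    (⨅ (K' : Compacts Y) (_ : K ⊆ interior (K' : Set Y)), lam φ (K' : Set Y)) ≤ lam φ K := by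
  refine ENNReal.le_of_forall_pos_le_add fun ε hε _ => ?_
  obtain ⟨f, hfadm, hφf⟩ := lam_exists_lt hsmul hdense hK
    (show (ε : ℝ≥0∞) ≠ 0 by exact_mod_cast hε.ne')
  have hφftop : φ f ≠ ∞ :=
    ne_top_of_lt (hφf.trans (ENNReal.add_lt_top.mpr
      ⟨(lam_ne_top hsmul hdense hK).lt_top, ENNReal.coe_lt_top⟩))
  suffices h : (⨅ (K' : Compacts Y) (_ : K ⊆ interior (K' : Set Y)), lam φ (K' : Set Y)) ≤ φ f by
    exact h.trans hφf.le
  -- approximate with the compact sets {c_m ≤ f}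
  set c : ℕ → ℝ := fun m => 1 - 1 / (m + 2) with hc
  have hc0 : ∀ m, 0 < c m := by
    intro m
    have h1 : (1 : ℝ) / (m + 2) ≤ 1 / 2 := by
      apply div_le_div_of_nonneg_left <;> norm_num
    have h2 : (0:ℝ) < 1 / (m + 2) := by positivity
    simp only [hc]; linarith
  have hc1 : ∀ m, c m < 1 := by
    intro m
    have h2 : (0:ℝ) < 1 / (m + 2) := by positivity
    simp only [hc]; linarith
  have hKm : ∀ m : ℕ, IsCompact {y | c m ≤ f y} := fun m => level_compact f (hc0 m)
  have hsub : ∀ m : ℕ, K ⊆ interior {y | c m ≤ f y} := by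
    intro m
    have hopen : IsOpen {y | c m < f y} := isOpen_lt continuous_const f.continuous
    have h1 : K ⊆ {y | c m < f y} := fun x hx => lt_of_lt_of_le (hc1 m) (hfadm.2 x hx)
    exact h1.trans (interior_maximal (Set.setOf_subset_setOf.mpr fun y hy => le_of_lt hy) hopen)
  have hbound : ∀ m : ℕ, lam φ {y | c m ≤ f y} ≤ ENNReal.ofReal (c m)⁻¹ * φ f := by
    intro m
    have hadm : (c m)⁻¹ • f ∈ Adm {y | c m ≤ f y} := by
      constructor
      · intro y
        have : ((c m)⁻¹ • f) y = (c m)⁻¹ * f y := rfl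
        rw [this]
        exact mul_nonneg (inv_nonneg.mpr (hc0 m).le) (hfadm.1 y)
      · intro x hx
        have h1 : ((c m)⁻¹ • f) x = (c m)⁻¹ * f x := rfl
        rw [h1, ← inv_mul_cancel₀ (hc0 m).ne']
        exact mul_le_mul_of_nonneg_left hx (inv_nonneg.mpr (hc0 m).le)
    calc lam φ {y | c m ≤ f y} ≤ φ ((c m)⁻¹ • f) := lam_le φ hadm
    _ = ENNReal.ofReal (c m)⁻¹ * φ f := hsmul _ f (inv_nonneg.mpr (hc0 m).le) hfadm.1
  have htend : Tendsto (fun m : ℕ => ENNReal.ofReal (c m)⁻¹ * φ f) atTop (𝓝 (φ f)) := by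
    have h0 : Tendsto (fun m : ℕ => 1 / ((m : ℝ) + 2)) atTop (𝓝 0) := by
      have h := tendsto_one_div_add_atTop_nhds_zero_nat (𝕜 := ℝ)
      have hcomp := h.comp (tendsto_add_atTop_nat 1)
      convert hcomp using 2 with m
      simp; push_cast; ring
    have h1 : Tendsto c atTop (𝓝 1) := by
      rw [hc]
      have h := (tendsto_const_nhds (α := ℕ) (x := (1:ℝ))).sub h0
      simpa using h
    have h2 : Tendsto (fun m => (c m)⁻¹) atTop (𝓝 1) := by
      have := h1.inv₀ (one_ne_zero)
      simpa using this
    have h3 : Tendsto (fun m => ENNReal.ofReal (c m)⁻¹) atTop (𝓝 1) := by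
      have := (ENNReal.continuous_ofReal.tendsto 1).comp h2
      simpa [Function.comp_def] using this
    have h4 := ENNReal.Tendsto.mul_const h3 (Or.inr hφftop)
    simpa using h4
  refine ge_of_tendsto htend (Filter.Eventually.of_forall fun m => ?_)
  exact le_trans (iInf₂_le (⟨{y | c m ≤ f y}, hKm m⟩ : Compacts Y) (hsub m)) (hbound m)

variable (φ) in
/-- The content associated to the weight `φ`. -/
noncomputable def contentOf
    (hadd : ∀ f g : C₀(Y, ℝ), (∀ y, 0 ≤ f y) → (∀ y, 0 ≤ g y) →
      φ (f + g) = φ f + φ g)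
    (hsmul : ∀ (r : ℝ) (f : C₀(Y, ℝ)), 0 ≤ r → (∀ y, 0 ≤ f y) →
      φ (r • f) = ENNReal.ofReal r * φ f)
    (hdense : ∀ f : C₀(Y, ℝ), (∀ y, 0 ≤ f y) →
      f ∈ closure {g : C₀(Y, ℝ) | (∀ y, 0 ≤ g y) ∧ φ g < ∞}) :
    Content Y where
  toFun K := (lam φ (K : Set Y)).toNNReal
  mono' K₁ K₂ h :=
    ENNReal.toNNReal_mono (lam_ne_top hsmul hdense K₂.2) (lam_mono φ h)
  sup_disjoint' K₁ K₂ hd _ _ := by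
    have he : lam φ ((K₁ ⊔ K₂ : Compacts Y) : Set Y) = lam φ (K₁ : Set Y) + lam φ (K₂ : Set Y) :=
      le_antisymm (lam_union_le hadd hsmul hdense K₁.2 K₂.2)
        (lam_union_disjoint hadd K₁.2 K₂.2 hd)
    rw [he]
    exact ENNReal.toNNReal_add (lam_ne_top hsmul hdense K₁.2) (lam_ne_top hsmul hdense K₂.2)
  sup_le' K₁ K₂ := by
    have he := lam_union_le hadd hsmul hdense K₁.2 K₂.2
    have h1 : lam φ ((K₁ ⊔ K₂ : Compacts Y) : Set Y) ≤ lam φ (K₁ : Set Y) + lam φ (K₂ : Set Y) := he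
    calc (lam φ ((K₁ ⊔ K₂ : Compacts Y) : Set Y)).toNNReal
        ≤ (lam φ (K₁ : Set Y) + lam φ (K₂ : Set Y)).toNNReal :=
          ENNReal.toNNReal_mono (ENNReal.add_ne_top.mpr
            ⟨lam_ne_top hsmul hdense K₁.2, lam_ne_top hsmul hdense K₂.2⟩) h1
    _ = _ := ENNReal.toNNReal_add (lam_ne_top hsmul hdense K₁.2) (lam_ne_top hsmul hdense K₂.2)

lemma contentOf_coe
    (hadd : ∀ f g : C₀(Y, ℝ), (∀ y, 0 ≤ f y) → (∀ y, 0 ≤ g y) →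
      φ (f + g) = φ f + φ g)
    (hsmul : ∀ (r : ℝ) (f : C₀(Y, ℝ)), 0 ≤ r → (∀ y, 0 ≤ f y) →
      φ (r • f) = ENNReal.ofReal r * φ f)
    (hdense : ∀ f : C₀(Y, ℝ), (∀ y, 0 ≤ f y) →
      f ∈ closure {g : C₀(Y, ℝ) | (∀ y, 0 ≤ g y) ∧ φ g < ∞})
    (K : Compacts Y) :
    (contentOf φ hadd hsmul hdense K : ℝ≥0∞) = lam φ (K : Set Y) := by
  show ((lam φ (K : Set Y)).toNNReal : ℝ≥0∞) = _
  exact ENNReal.coe_toNNReal (lam_ne_top hsmul hdense K.2)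

lemma contentOf_regular
    (hadd : ∀ f g : C₀(Y, ℝ), (∀ y, 0 ≤ f y) → (∀ y, 0 ≤ g y) →
      φ (f + g) = φ f + φ g)
    (hsmul : ∀ (r : ℝ) (f : C₀(Y, ℝ)), 0 ≤ r → (∀ y, 0 ≤ f y) →
      φ (r • f) = ENNReal.ofReal r * φ f)
    (hdense : ∀ f : C₀(Y, ℝ), (∀ y, 0 ≤ f y) →
      f ∈ closure {g : C₀(Y, ℝ) | (∀ y, 0 ≤ g y) ∧ φ g < ∞}) :
    Content.ContentRegular (contentOf φ hadd hsmul hdense) := by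
  intro K
  simp only [contentOf_coe hadd hsmul hdense]
  refine le_antisymm (le_iInf₂ fun K' hK' => ?_) ?_
  · exact lam_mono φ (hK'.trans interior_subset)
  · exact lam_nbhd_le hsmul hdense K.2

lemma sum_apply' {ι : Type*} (s : Finset ι) (F : ι → C₀(Y, ℝ)) (y : Y) :
    (∑ j ∈ s, F j) y = ∑ j ∈ s, F j y := by
  classical
  induction s using Finset.induction_on with
  | empty => rfl
  | insert _ _ h ih =>
      rw [Finset.sum_insert h, Finset.sum_insert h, ZeroAtInftyContinuousMap.add_apply, ih]

lemma phi_sum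
    (hadd : ∀ f g : C₀(Y, ℝ), (∀ y, 0 ≤ f y) → (∀ y, 0 ≤ g y) →
      φ (f + g) = φ f + φ g)
    (hsmul : ∀ (r : ℝ) (f : C₀(Y, ℝ)), 0 ≤ r → (∀ y, 0 ≤ f y) →
      φ (r • f) = ENNReal.ofReal r * φ f)
    {ι : Type*} (s : Finset ι) (F : ι → C₀(Y, ℝ)) (hF : ∀ i, ∀ y, 0 ≤ F i y) :
    φ (∑ i ∈ s, F i) = ∑ i ∈ s, φ (F i) := by
  classical
  induction s using Finset.induction_on with
  | empty => simpa using phi_zero hsmul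
  | insert _ _ h ih =>
      rw [Finset.sum_insert h, Finset.sum_insert h, ← ih,
        hadd _ _ (hF _) (fun y => by
          rw [sum_apply']
          exact Finset.sum_nonneg fun i _ => hF i y)]

variable [MeasurableSpace Y] [BorelSpace Y]

variable (φ) in
/-- The measure associated to the weight `φ`. -/
noncomputable def muOf
    (hadd : ∀ f g : C₀(Y, ℝ), (∀ y, 0 ≤ f y) → (∀ y, 0 ≤ g y) →
      φ (f + g) = φ f + φ g)
    (hsmul : ∀ (r : ℝ) (f : C₀(Y, ℝ)), 0 ≤ r → (∀ y, 0 ≤ f y) →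
      φ (r • f) = ENNReal.ofReal r * φ f)
    (hdense : ∀ f : C₀(Y, ℝ), (∀ y, 0 ≤ f y) →
      f ∈ closure {g : C₀(Y, ℝ) | (∀ y, 0 ≤ g y) ∧ φ g < ∞}) : Measure Y :=
  (contentOf φ hadd hsmul hdense).measure

variable
  (hadd : ∀ f g : C₀(Y, ℝ), (∀ y, 0 ≤ f y) → (∀ y, 0 ≤ g y) →
      φ (f + g) = φ f + φ g)
  (hsmul : ∀ (r : ℝ) (f : C₀(Y, ℝ)), 0 ≤ r → (∀ y, 0 ≤ f y) →
      φ (r • f) = ENNReal.ofReal r * φ f)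
  (hdense : ∀ f : C₀(Y, ℝ), (∀ y, 0 ≤ f y) →
      f ∈ closure {g : C₀(Y, ℝ) | (∀ y, 0 ≤ g y) ∧ φ g < ∞})

lemma muOf_regular : (muOf φ hadd hsmul hdense).Regular := by
  unfold muOf; infer_instance

lemma muOf_compacts (K : Compacts Y) :
    muOf φ hadd hsmul hdense (K : Set Y) = lam φ (K : Set Y) := by
  rw [muOf, Content.measure_eq_content_of_regular _ (contentOf_regular hadd hsmul hdense) K,
    contentOf_coe hadd hsmul hdense]

lemma phi_eq_lintegral_of_compactSupport
    {f : C₀(Y, ℝ)} (hf : ∀ y, 0 ≤ f y) (hcs : HasCompactSupport (f : Y → ℝ)) :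
    φ f = ∫⁻ y, ENNReal.ofReal (f y) ∂(muOf φ hadd hsmul hdense) := by
  set μ := muOf φ hadd hsmul hdense with hμ
  set I := ∫⁻ y, ENNReal.ofReal (f y) ∂μ with hI
  set T := lam φ (tsupport (f : Y → ℝ)) with hT
  have hTne : T ≠ ∞ := lam_ne_top hsmul hdense hcs
  have hnorm : ∀ y, f y ≤ ‖f‖ := by
    intro y
    have h1 : ‖f.toBCF y‖ ≤ ‖f.toBCF‖ := BoundedContinuousFunction.norm_coe_le_norm f.toBCF y
    rw [ZeroAtInftyContinuousMap.norm_toBCF_eq_norm] at h1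
    calc f y ≤ |f y| := le_abs_self _
    _ ≤ ‖f‖ := h1
  have key : ∀ n : ℕ, φ f ≤ I + ENNReal.ofReal (((n : ℝ) + 1)⁻¹) * T ∧
      I ≤ φ f + ENNReal.ofReal (((n : ℝ) + 1)⁻¹) * T := by
    intro n
    have hn0 : (0 : ℝ) < (n : ℝ) + 1 := by positivity
    set r : ℝ := ((n : ℝ) + 1)⁻¹ with hr
    have hr0 : 0 ≤ r := by positivity
    set N : ℕ := ⌈((n : ℝ) + 1) * ‖f‖⌉₊ + 1 with hNdef
    have hcont : ∀ j : ℕ, Continuous (fun t : ℝ => min (max (((n : ℝ) + 1) * t - j) 0) 1) :=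
      fun j => (((continuous_const.mul continuous_id).sub continuous_const).max
        continuous_const).min continuous_const
    have hzero : ∀ j : ℕ, min (max (((n : ℝ) + 1) * 0 - j) 0) 1 = 0 := fun j => by
      rw [mul_zero, zero_sub, max_eq_right (neg_nonpos.mpr (Nat.cast_nonneg j)),
        min_eq_left zero_le_one]
    set u : ℕ → C₀(Y, ℝ) := fun j => comp0 _ (hcont j) (hzero j) f with hu
    have hu_apply : ∀ j y, u j y = min (max (((n : ℝ) + 1) * f y - j) 0) 1 := fun j y => rfl
    have hu_pos : ∀ j y, 0 ≤ u j y := fun j y =>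
      le_min (le_max_right _ 0) zero_le_one
    have hu_le1 : ∀ j y, u j y ≤ 1 := fun j y => min_le_right _ _
    -- the level sets
    set L : ℕ → Set Y := fun j => {y | ((j : ℝ) + 1) / ((n : ℝ) + 1) ≤ f y} with hL
    have hLcpt : ∀ j, IsCompact (L j) := fun j => level_compact f (by positivity)
    have hLmeas : ∀ j, MeasurableSet (L j) := fun j =>
      (isClosed_le continuous_const f.continuous).measurableSet
    set a : ℕ → ℝ≥0∞ := fun j => lam φ (L j) with ha
    set b : ℕ → ℝ≥0∞ := fun j => Nat.casesOn j T (fun j' => a j') with hb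
    -- u j = 1 on L j
    have hu_one : ∀ j, ∀ x ∈ L j, u j x = 1 := by
      intro j x hx
      have hx' : (j : ℝ) + 1 ≤ f x * ((n : ℝ) + 1) := (div_le_iff₀ hn0).mp hx
      have h1 : (1 : ℝ) ≤ ((n : ℝ) + 1) * f x - j := by nlinarith
      rw [hu_apply, max_eq_left (by linarith), min_eq_right h1]
    -- u j vanishes outside b-support set
    have hu_zero0 : ∀ y, y ∉ tsupport (f : Y → ℝ) → u 0 y = 0 := by
      intro y hy
      have hfy : f y = 0 := image_eq_zero_of_notMem_tsupport hy
      rw [hu_apply, hfy]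
      simpa using hzero 0
    have hu_zeroS : ∀ j : ℕ, ∀ y, y ∉ L j → u (j + 1) y = 0 := by
      intro j y hy
      have hfy : f y < ((j : ℝ) + 1) / ((n : ℝ) + 1) := lt_of_not_ge hy
      have h1 : ((n : ℝ) + 1) * f y - ((j : ℕ) + 1 : ℕ) ≤ 0 := by
        rw [lt_div_iff₀ hn0] at hfy
        push_cast
        nlinarith
      rw [hu_apply, max_eq_right h1, min_eq_left zero_le_one]
    -- φ-bounds
    have hlow : ∀ j, a j ≤ φ (u j) := by
      intro j
      exact lam_le φ ⟨hu_pos j, fun x hx => (hu_one j x hx).ge⟩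
    have hup : ∀ j, φ (u j) ≤ b j := by
      intro j
      have hgen : ∀ (S : Set Y), (∀ y, y ∉ S → u j y = 0) → φ (u j) ≤ lam φ S := by
        intro S hS
        refine le_lam φ fun h hh => phi_mono hadd (hu_pos j) fun y => ?_
        by_cases hy : y ∈ S
        · exact (hu_le1 j y).trans (hh.2 y hy)
        · rw [hS y hy]; exact hh.1 y
      cases j with
      | zero => exact hgen _ hu_zero0
      | succ j' => exact hgen _ (hu_zeroS j')
    -- μ-values on compacts
    have hμL : ∀ j, μ (L j) = a j := fun j => muOf_compacts hadd hsmul hdense ⟨L j, hLcpt j⟩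
    have hμT : μ (tsupport (f : Y → ℝ)) = T := muOf_compacts hadd hsmul hdense ⟨_, hcs⟩
    -- integral bounds
    have hIlow : ∀ j, a j ≤ ∫⁻ y, ENNReal.ofReal (u j y) ∂μ := by
      intro j
      calc a j = μ (L j) := (hμL j).symm
      _ = ∫⁻ y, (L j).indicator (fun _ => 1) y ∂μ := (lintegral_indicator_one (hLmeas j)).symm
      _ ≤ ∫⁻ y, ENNReal.ofReal (u j y) ∂μ := by
          refine lintegral_mono fun y => ?_
          by_cases hy : y ∈ L j
          · rw [Set.indicator_of_mem hy, hu_one j y hy]; simp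
          · rw [Set.indicator_of_notMem hy]; exact zero_le
    have hIup : ∀ j, (∫⁻ y, ENNReal.ofReal (u j y) ∂μ) ≤ b j := by
      intro j
      have hgen : ∀ (S : Set Y), MeasurableSet S → (∀ y, y ∉ S → u j y = 0) →
          (∫⁻ y, ENNReal.ofReal (u j y) ∂μ) ≤ μ S := by
        intro S hSm hS
        calc (∫⁻ y, ENNReal.ofReal (u j y) ∂μ)
            ≤ ∫⁻ y, S.indicator (fun _ => 1) y ∂μ := by
              refine lintegral_mono fun y => ?_
              by_cases hy : y ∈ S
              · rw [Set.indicator_of_mem hy]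
                exact ENNReal.ofReal_le_one.mpr (hu_le1 j y)
              · rw [hS y hy, Set.indicator_of_notMem hy]; simp
        _ = μ S := lintegral_indicator_one hSm
      cases j with
      | zero =>
          calc (∫⁻ y, ENNReal.ofReal (u 0 y) ∂μ)
              ≤ μ (tsupport (f : Y → ℝ)) :=
                hgen _ (isClosed_tsupport _).measurableSet hu_zero0
          _ = T := hμT
      | succ j' =>
          calc (∫⁻ y, ENNReal.ofReal (u (j' + 1) y) ∂μ)
              ≤ μ (L j') := hgen _ (hLmeas j') (hu_zeroS j')
          _ = a j' := hμL j'
    -- the sum identity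
    have hFy : ∀ y, (∑ j ∈ Finset.range N, u j) y = min (((n : ℝ) + 1) * f y) N := by
      intro y
      rw [sum_apply']
      exact clamp_sum ((n : ℝ) + 1) N (f y) (hf y) (mul_nonneg hn0.le (hf y))
    have hmin : ∀ y, ((n : ℝ) + 1) * f y ≤ N := by
      intro y
      have h1 : ((n : ℝ) + 1) * f y ≤ ((n : ℝ) + 1) * ‖f‖ :=
        mul_le_mul_of_nonneg_left (hnorm y) hn0.le
      have h2 : ((n : ℝ) + 1) * ‖f‖ ≤ (⌈((n : ℝ) + 1) * ‖f‖⌉₊ : ℝ) := Nat.le_ceil _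
      have h3 : ((⌈((n : ℝ) + 1) * ‖f‖⌉₊ : ℕ) : ℝ) ≤ (N : ℝ) := by
        rw [hNdef]; push_cast; linarith
      linarith
    have hf_eq : r • (∑ j ∈ Finset.range N, u j) = f := by
      ext y
      have h1 : (r • (∑ j ∈ Finset.range N, u j)) y = r * (∑ j ∈ Finset.range N, u j) y := rfl
      rw [h1, hFy y, min_eq_left (hmin y), hr, ← mul_assoc, inv_mul_cancel₀ hn0.ne', one_mul]
    have hFpos : ∀ y, 0 ≤ (∑ j ∈ Finset.range N, u j) y := by
      intro y
      rw [sum_apply']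
      exact Finset.sum_nonneg fun j _ => hu_pos j y
    have hφ_eq : φ f = ENNReal.ofReal r * ∑ j ∈ Finset.range N, φ (u j) := by
      rw [← hf_eq, hsmul r _ hr0 hFpos, phi_sum hadd hsmul _ _ (fun j y => hu_pos j y)]
    have hmeasu : ∀ j : ℕ, Measurable fun y => ENNReal.ofReal (u j y) := fun j =>
      ((u j).continuous.measurable).ennreal_ofReal
    have hI_eq : I = ENNReal.ofReal r * ∑ j ∈ Finset.range N, ∫⁻ y, ENNReal.ofReal (u j y) ∂μ := by
      rw [hI]
      have h1 : ∀ y, ENNReal.ofReal (f y) =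
          ENNReal.ofReal r * ∑ j ∈ Finset.range N, ENNReal.ofReal (u j y) := by
        intro y
        conv_lhs => rw [← hf_eq]
        have h2 : (r • (∑ j ∈ Finset.range N, u j)) y
            = r * (∑ j ∈ Finset.range N, u j) y := rfl
        rw [h2, ENNReal.ofReal_mul hr0, sum_apply',
          ENNReal.ofReal_sum_of_nonneg (fun j _ => hu_pos j y)]
      calc (∫⁻ y, ENNReal.ofReal (f y) ∂μ)
          = ∫⁻ y, ENNReal.ofReal r * ∑ j ∈ Finset.range N, ENNReal.ofReal (u j y) ∂μ := by
            exact lintegral_congr h1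
      _ = ENNReal.ofReal r * ∫⁻ y, ∑ j ∈ Finset.range N, ENNReal.ofReal (u j y) ∂μ :=
            lintegral_const_mul _ (Finset.measurable_sum _ fun j _ => hmeasu j)
      _ = ENNReal.ofReal r * ∑ j ∈ Finset.range N, ∫⁻ y, ENNReal.ofReal (u j y) ∂μ := by
            rw [lintegral_finset_sum _ fun j _ => hmeasu j]
    -- sum comparison
    have hb_sum : ∑ j ∈ Finset.range N, b j ≤ T + ∑ j ∈ Finset.range N, a j := by
      rw [hNdef, Finset.sum_range_succ' b]
      have h1 : ∑ j ∈ Finset.range ⌈((n : ℝ) + 1) * ‖f‖⌉₊, b (j + 1)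
          = ∑ j ∈ Finset.range ⌈((n : ℝ) + 1) * ‖f‖⌉₊, a j := rfl
      rw [h1]
      have h2 : b 0 = T := rfl
      rw [h2, add_comm]
      refine add_le_add le_rfl (Finset.sum_le_sum_of_subset_of_nonneg ?_ ?_)
      · exact Finset.range_subset_range.mpr (Nat.le_succ _)
      · intro j _ _; exact zero_le
    set Sa := ∑ j ∈ Finset.range N, a j with hSa
    have hφ_low : ENNReal.ofReal r * Sa ≤ φ f := by
      rw [hφ_eq]
      exact mul_le_mul_right (Finset.sum_le_sum fun j _ => hlow j) _
    have hφ_up : φ f ≤ ENNReal.ofReal r * Sa + ENNReal.ofReal r * T := by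
      rw [hφ_eq]
      calc ENNReal.ofReal r * ∑ j ∈ Finset.range N, φ (u j)
          ≤ ENNReal.ofReal r * ∑ j ∈ Finset.range N, b j :=
            mul_le_mul_right (Finset.sum_le_sum fun j _ => hup j) _
      _ ≤ ENNReal.ofReal r * (T + Sa) := mul_le_mul_right hb_sum _
      _ = ENNReal.ofReal r * Sa + ENNReal.ofReal r * T := by rw [mul_add, add_comm]
    have hI_low : ENNReal.ofReal r * Sa ≤ I := by
      rw [hI_eq]
      exact mul_le_mul_right (Finset.sum_le_sum fun j _ => hIlow j) _
    have hI_up : I ≤ ENNReal.ofReal r * Sa + ENNReal.ofReal r * T := by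
      rw [hI_eq]
      calc ENNReal.ofReal r * ∑ j ∈ Finset.range N, ∫⁻ y, ENNReal.ofReal (u j y) ∂μ
          ≤ ENNReal.ofReal r * ∑ j ∈ Finset.range N, b j :=
            mul_le_mul_right (Finset.sum_le_sum fun j _ => hIup j) _
      _ ≤ ENNReal.ofReal r * (T + Sa) := mul_le_mul_right hb_sum _
      _ = ENNReal.ofReal r * Sa + ENNReal.ofReal r * T := by rw [mul_add, add_comm]
    constructor
    · exact hφ_up.trans (add_le_add_left hI_low _)
    · exact hI_up.trans (add_le_add_left hφ_low _)
  -- pass to the limit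
  have htend : Tendsto (fun n : ℕ => ENNReal.ofReal (((n : ℝ) + 1)⁻¹) * T) atTop (𝓝 0) := by
    have h1 : Tendsto (fun n : ℕ => (((n : ℝ) + 1)⁻¹)) atTop (𝓝 0) :=
      tendsto_one_div_add_atTop_nhds_zero_nat.congr fun n => by rw [one_div]
    have h2 : Tendsto (fun n : ℕ => ENNReal.ofReal (((n : ℝ) + 1)⁻¹)) atTop (𝓝 0) := by
      have := (ENNReal.continuous_ofReal.tendsto 0).comp h1
      simpa [Function.comp_def] using this
    have h3 := ENNReal.Tendsto.mul_const h2 (Or.inr hTne)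
    simpa using h3
  refine le_antisymm ?_ ?_
  · have h4 : Tendsto (fun n : ℕ => I + ENNReal.ofReal (((n : ℝ) + 1)⁻¹) * T) atTop (𝓝 I) := by
      have := (tendsto_const_nhds (x := I) (f := atTop (α := ℕ))).add htend
      simpa using this
    exact ge_of_tendsto h4 (Filter.Eventually.of_forall fun n => (key n).1)
  · have h4 : Tendsto (fun n : ℕ => φ f + ENNReal.ofReal (((n : ℝ) + 1)⁻¹) * T) atTop
        (𝓝 (φ f)) := by
      have := (tendsto_const_nhds (x := φ f) (f := atTop (α := ℕ))).add htend
      simpa using this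
    exact ge_of_tendsto h4 (Filter.Eventually.of_forall fun n => (key n).2)

lemma phi_eq_lintegral
    (hlsc : ∀ (fn : ℕ → C₀(Y, ℝ)) (f : C₀(Y, ℝ)), (∀ n y, 0 ≤ fn n y) →
      (∀ y, 0 ≤ f y) → TendstoUniformly (fun n y => fn n y) (fun y => f y) atTop →
      φ f ≤ liminf (fun n => φ (fn n)) atTop)
    {f : C₀(Y, ℝ)} (hf : ∀ y, 0 ≤ f y) :
    φ f = ∫⁻ y, ENNReal.ofReal (f y) ∂(muOf φ hadd hsmul hdense) := by
  set μ := muOf φ hadd hsmul hdense with hμ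
  have hc : ∀ n : ℕ, (0 : ℝ) < 1 / ((n : ℝ) + 1) := fun n => by positivity
  have hcont : ∀ n : ℕ, Continuous (fun t : ℝ => max (t - 1 / ((n : ℝ) + 1)) 0) := fun n =>
    (continuous_id.sub continuous_const).max continuous_const
  have hzero : ∀ n : ℕ, max ((0 : ℝ) - 1 / ((n : ℝ) + 1)) 0 = 0 := fun n =>
    max_eq_right (by linarith [hc n])
  set fn : ℕ → C₀(Y, ℝ) := fun n => comp0 _ (hcont n) (hzero n) f with hfn
  have hfn_apply : ∀ n y, fn n y = max (f y - 1 / ((n : ℝ) + 1)) 0 := fun n y => rfl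
  have hfn_pos : ∀ n y, 0 ≤ fn n y := fun n y => le_max_right _ _
  have hfn_le : ∀ n y, fn n y ≤ f y := fun n y =>
    max_le (by linarith [hc n]) (hf y)
  have hdiff : ∀ n y, f y - fn n y ≤ 1 / ((n : ℝ) + 1) := by
    intro n y
    rw [hfn_apply]
    rcases le_total (f y - 1 / ((n : ℝ) + 1)) 0 with h | h
    · rw [max_eq_right h]; linarith
    · rw [max_eq_left h]; linarith
  have hfn_cs : ∀ n, HasCompactSupport ((fn n : Y → ℝ)) := by
    intro n
    refine HasCompactSupport.intro (level_compact f (hc n)) fun y hy => ?_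
    have : f y < 1 / ((n : ℝ) + 1) := lt_of_not_ge hy
    rw [hfn_apply, max_eq_right (by linarith)]
  have hA : ∀ n, φ (fn n) = ∫⁻ y, ENNReal.ofReal (fn n y) ∂μ := fun n =>
    phi_eq_lintegral_of_compactSupport hadd hsmul hdense (hfn_pos n) (hfn_cs n)
  have h1n : Tendsto (fun n : ℕ => 1 / ((n : ℝ) + 1)) atTop (𝓝 0) :=
    tendsto_one_div_add_atTop_nhds_zero_nat
  -- uniform convergence
  have hunif : TendstoUniformly (fun n y => fn n y) (fun y => f y) atTop := by
    rw [Metric.tendstoUniformly_iff]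
    intro ε hε
    filter_upwards [h1n.eventually (gt_mem_nhds hε)] with n hn y
    rw [Real.dist_eq, abs_of_nonneg (by linarith [hfn_le n y])]
    calc f y - fn n y ≤ 1 / ((n : ℝ) + 1) := hdiff n y
    _ < ε := hn
  -- monotone convergence for the integrals
  have htendI : Tendsto (fun n => ∫⁻ y, ENNReal.ofReal (fn n y) ∂μ) atTop
      (𝓝 (∫⁻ y, ENNReal.ofReal (f y) ∂μ)) := by
    refine lintegral_tendsto_of_tendsto_of_monotone
      (fun n => ((fn n).continuous.measurable).ennreal_ofReal.aemeasurable) ?_ ?_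
    · refine Filter.Eventually.of_forall fun y => ?_
      intro n m hnm
      refine ENNReal.ofReal_le_ofReal ?_
      rw [hfn_apply, hfn_apply]
      refine max_le_max ?_ le_rfl
      have : 1 / ((m : ℝ) + 1) ≤ 1 / ((n : ℝ) + 1) := by
        apply one_div_le_one_div_of_le (by positivity)
        exact_mod_cast add_le_add_left (Nat.cast_le.mpr hnm) 1
      linarith
    · refine Filter.Eventually.of_forall fun y => ?_
      have h2 : Tendsto (fun n : ℕ => max (f y - 1 / ((n : ℝ) + 1)) 0) atTop (𝓝 (f y)) := by
        have h3 := (tendsto_const_nhds (x := f y) (f := atTop (α := ℕ))).sub h1n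
        have h4 := h3.max (tendsto_const_nhds (x := (0 : ℝ)))
        rw [sub_zero, max_eq_left (hf y)] at h4
        exact h4
      have h5 := (ENNReal.continuous_ofReal.tendsto (f y)).comp h2
      exact h5
  refine le_antisymm ?_ ?_
  · have h6 := hlsc fn f hfn_pos hf hunif
    calc φ f ≤ liminf (fun n => φ (fn n)) atTop := h6
    _ = liminf (fun n => ∫⁻ y, ENNReal.ofReal (fn n y) ∂μ) atTop := by
        refine liminf_congr (Filter.Eventually.of_forall fun n => hA n)
    _ = ∫⁻ y, ENNReal.ofReal (f y) ∂μ := htendI.liminf_eq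
  · refine le_of_tendsto htendI (Filter.Eventually.of_forall fun n => ?_)
    rw [← hA n]
    exact phi_mono hadd (hfn_pos n) (hfn_le n)

end core

section uniqueness

variable [LocallyCompactSpace Y] [T2Space Y] [MeasurableSpace Y] [BorelSpace Y]

lemma compact_le_of_lintegral_eq {μ ν : Measure Y} (hν : ν.Regular)
    (h : ∀ f : C₀(Y, ℝ), (∀ y, 0 ≤ f y) →
      ∫⁻ y, ENNReal.ofReal (f y) ∂μ = ∫⁻ y, ENNReal.ofReal (f y) ∂ν)
    {K : Set Y} (hK : IsCompact K) : μ K ≤ ν K := by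
  haveI := hν
  refine ENNReal.le_of_forall_pos_le_add fun ε hε hνtop => ?_
  obtain ⟨U, hKU, hUopen, hνU⟩ := Set.exists_isOpen_lt_of_lt K (ν K + ε)
    (ENNReal.lt_add_right hνtop.ne (by exact_mod_cast hε.ne'))
  obtain ⟨χ, hχ1, hχ0, hχcs, hχ01⟩ := exists_continuous_one_zero_of_isCompact hK
    hUopen.isClosed_compl (disjoint_compl_right_iff_subset.mpr hKU)
  set g : C₀(Y, ℝ) := ofCS χ hχcs with hg
  have hgpos : ∀ y, 0 ≤ g y := fun y => (hχ01 y).1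
  have h1 : μ K ≤ ∫⁻ y, ENNReal.ofReal (g y) ∂μ := by
    rw [← lintegral_indicator_one hK.measurableSet]
    refine lintegral_mono fun y => ?_
    by_cases hy : y ∈ K
    · rw [Set.indicator_of_mem hy]
      have : g y = 1 := hχ1 hy
      rw [this]; simp
    · rw [Set.indicator_of_notMem hy]; exact zero_le
  have h2 : (∫⁻ y, ENNReal.ofReal (g y) ∂ν) ≤ ν U := by
    rw [← lintegral_indicator_one hUopen.measurableSet]
    refine lintegral_mono fun y => ?_
    by_cases hy : y ∈ U
    · rw [Set.indicator_of_mem hy]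
      exact ENNReal.ofReal_le_one.mpr (hχ01 y).2
    · rw [Set.indicator_of_notMem hy]
      have : g y = 0 := hχ0 (by simpa using hy)
      rw [this]; simp
  calc μ K ≤ ∫⁻ y, ENNReal.ofReal (g y) ∂μ := h1
  _ = ∫⁻ y, ENNReal.ofReal (g y) ∂ν := h g hgpos
  _ ≤ ν U := h2
  _ ≤ ν K + ε := hνU.le

lemma measure_eq_of_lintegral_eq {μ ν : Measure Y} (hμ : μ.Regular) (hν : ν.Regular)
    (h : ∀ f : C₀(Y, ℝ), (∀ y, 0 ≤ f y) →
      ∫⁻ y, ENNReal.ofReal (f y) ∂μ = ∫⁻ y, ENNReal.ofReal (f y) ∂ν) : μ = ν := by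
  haveI := hμ; haveI := hν
  have hcpt : ∀ K : Set Y, IsCompact K → μ K = ν K := fun K hK =>
    le_antisymm (compact_le_of_lintegral_eq hν h hK)
      (compact_le_of_lintegral_eq hμ (fun f hf => (h f hf).symm) hK)
  have hopen : ∀ U : Set Y, IsOpen U → μ U = ν U := by
    have haux : ∀ {μ' ν' : Measure Y}, μ'.Regular →
        (∀ K : Set Y, IsCompact K → μ' K = ν' K) →
        ∀ U : Set Y, IsOpen U → μ' U ≤ ν' U := by
      intro μ' ν' hreg hcc U hU
      refine le_of_forall_lt fun r hr => ?_
      obtain ⟨K, hKU, hKc, hrK⟩ := hreg.innerRegular hU r hr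
      calc r < μ' K := hrK
      _ = ν' K := hcc K hKc
      _ ≤ ν' U := measure_mono hKU
    exact fun U hU => le_antisymm (haux hμ hcpt U hU)
      (haux hν (fun K hK => (hcpt K hK).symm) U hU)
  ext s hs
  rw [Set.measure_eq_iInf_isOpen s μ, Set.measure_eq_iInf_isOpen s ν]
  exact iInf_congr fun U => iInf_congr fun hsU => iInf_congr fun hU => hopen U hU

end uniqueness

end RMKW


/-- Let `Y` be a locally compact Hausdorff space and let `φ` be a
densely defined, lower semicontinuous weight on `C₀(Y)` (an `[0,∞]`-valued map on the
nonnegative cone, additive and positively homogeneous).  Then there is a unique Radon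
measure `μ` on `Y` with `φ f = ∫⁻ f dμ` for every nonnegative `f ∈ C₀(Y)`. -/
theorem exists_unique_radon_measure_of_weight
    {Y : Type*} [TopologicalSpace Y] [LocallyCompactSpace Y] [T2Space Y]
    [MeasurableSpace Y] [BorelSpace Y]
    (φ : C₀(Y, ℝ) → ℝ≥0∞)
    -- (i) additivity
    (hadd : ∀ f g : C₀(Y, ℝ), (∀ y, 0 ≤ f y) → (∀ y, 0 ≤ g y) →
      φ (f + g) = φ f + φ g)
    -- (ii) positive homogeneity
    (hsmul : ∀ (r : ℝ) (f : C₀(Y, ℝ)), 0 ≤ r → (∀ y, 0 ≤ f y) →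
      φ (r • f) = ENNReal.ofReal r * φ f)
    -- (iii) lower semicontinuity w.r.t. uniform convergence
    (hlsc : ∀ (fn : ℕ → C₀(Y, ℝ)) (f : C₀(Y, ℝ)), (∀ n y, 0 ≤ fn n y) →
      (∀ y, 0 ≤ f y) → TendstoUniformly (fun n y => fn n y) (fun y => f y) atTop →
      φ f ≤ liminf (fun n => φ (fn n)) atTop)
    -- (iv) densely defined
    (hdense : ∀ f : C₀(Y, ℝ), (∀ y, 0 ≤ f y) →
      f ∈ closure {g : C₀(Y, ℝ) | (∀ y, 0 ≤ g y) ∧ φ g < ∞}) :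
    ∃! μ : Measure Y, μ.Regular ∧
      ∀ f : C₀(Y, ℝ), (∀ y, 0 ≤ f y) → φ f = ∫⁻ y, ENNReal.ofReal (f y) ∂μ := by
  refine ⟨RMKW.muOf φ hadd hsmul hdense,
    ⟨RMKW.muOf_regular hadd hsmul hdense,
      fun f hf => RMKW.phi_eq_lintegral hadd hsmul hdense hlsc hf⟩, ?_⟩
  rintro ν ⟨hνreg, hν⟩
  refine RMKW.measure_eq_of_lintegral_eq hνreg (RMKW.muOf_regular hadd hsmul hdense)
    fun f hf => ?_
  rw [← hν f hf, ← RMKW.phi_eq_lintegral hadd hsmul hdense hlsc hf]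
end

section
/- Let Y be a locally compact Hausdorff space and let φ be a map from the nonnegative elements of C₀(Y) to [0,∞] such that φ(f+g) = φ(f) + φ(g) for all nonnegative f, g ∈ C₀(Y) and φ(λf) = λφ(f) for all real λ ≥ 0 (with 0·∞ = 0). Assume that φ is densely defined, i.e. the set {f ∈ C₀(Y) : f ≥ 0 and φ(f) < ∞} is dense in the set of nonnegative elements of C₀(Y) for the uniform norm. Then φ(g) < ∞ for every nonnegative continuous compactly supported function g on Y. -/
open scoped ENNReal ZeroAtInfty
open MeasureTheory

/-- Let `Y` be a locally compact Hausdorff space and let `φ` be an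
additive, positively homogeneous `[0,∞]`-valued map on the nonnegative cone of
`C₀(Y)`.  If `φ` is densely defined, then `φ g < ∞` for every nonnegative continuous
compactly supported `g`. -/
theorem weight_finite_on_compactly_supported
    {Y : Type*} [TopologicalSpace Y] [LocallyCompactSpace Y] [T2Space Y]
    (φ : C₀(Y, ℝ) → ℝ≥0∞)
    (hadd : ∀ f g : C₀(Y, ℝ), (∀ y, 0 ≤ f y) → (∀ y, 0 ≤ g y) →
      φ (f + g) = φ f + φ g)
    (hsmul : ∀ (r : ℝ) (f : C₀(Y, ℝ)), 0 ≤ r → (∀ y, 0 ≤ f y) →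
      φ (r • f) = ENNReal.ofReal r * φ f)
    (hdense : ∀ f : C₀(Y, ℝ), (∀ y, 0 ≤ f y) →
      f ∈ closure {g : C₀(Y, ℝ) | (∀ y, 0 ≤ g y) ∧ φ g < ∞})
    (g : C₀(Y, ℝ)) (hg : ∀ y, 0 ≤ g y) (hgc : HasCompactSupport fun y => g y) :
    φ g < ∞ := by
  -- Urysohn: a compactly supported `h` equal to 1 on the support of `g`.
  obtain ⟨h, hh1, -, hhc, hh01⟩ :=
    exists_continuous_one_zero_of_isCompact (s := tsupport fun y => g y) (t := (∅ : Set Y))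
      hgc isClosed_empty (Set.disjoint_empty _)
  -- package `h` as an element of `C₀(Y, ℝ)`
  set H : C₀(Y, ℝ) := ⟨h, hhc.is_zero_at_infty⟩ with hHdef
  have hH0 : ∀ y, 0 ≤ H y := fun y => (hh01 y).1
  -- approximate `H` within 1/2 by a finite element
  obtain ⟨f, ⟨hf0, hffin⟩, hdist⟩ :=
    Metric.mem_closure_iff.mp (hdense H hH0) (1/2) (by norm_num)
  -- on the support of `g`, `f ≥ 1/2`
  have hf_half : ∀ y ∈ tsupport fun z => g z, (1:ℝ)/2 ≤ f y := by
    intro y hy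
    have h1 : H y = 1 := hh1 hy
    have hb : |H y - f y| ≤ dist H f := by
      calc |H y - f y| = dist (H.toBCF y) (f.toBCF y) := (Real.dist_eq _ _).symm
      _ ≤ dist H.toBCF f.toBCF := BoundedContinuousFunction.dist_coe_le_dist y
      _ = dist H f := ZeroAtInftyContinuousMap.dist_toBCF_eq_dist
    have := abs_le.mp hb |>.2
    linarith [hdist.le, abs_le.mp hb |>.1]
  -- pointwise bound: `g ≤ (2 * ‖g‖) • f`
  have hle : ∀ y, g y ≤ (2 * ‖g‖) * f y := by
    intro y
    by_cases hy : y ∈ tsupport fun z => g z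
    · have h1 : g y ≤ ‖g‖ := by
        calc g y ≤ |g y| := le_abs_self _
        _ = ‖g y‖ := (Real.norm_eq_abs _).symm
        _ ≤ ‖g.toBCF‖ := g.toBCF.norm_coe_le_norm y
        _ = ‖g‖ := ZeroAtInftyContinuousMap.norm_toBCF_eq_norm
      have h2 : (1:ℝ)/2 ≤ f y := hf_half y hy
      nlinarith [norm_nonneg g]
    · have : g y = 0 := image_eq_zero_of_notMem_tsupport hy
      rw [this]
      have : 0 ≤ f y := hf0 y
      positivity
  -- monotonicity from additivity
  set c : ℝ := 2 * ‖g‖ with hc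
  have hcnn : 0 ≤ c := by positivity
  have hd0 : ∀ y, 0 ≤ (c • f - g) y := fun y => by
    simpa [sub_nonneg] using hle y
  have key : φ (c • f) = φ g + φ (c • f - g) := by
    have := hadd g (c • f - g) hg hd0
    simpa using this
  have : φ g ≤ φ (c • f) := key ▸ le_self_add
  calc φ g ≤ φ (c • f) := this
  _ = ENNReal.ofReal c * φ f := hsmul c f hcnn hf0
  _ < ∞ := ENNReal.mul_lt_top ENNReal.ofReal_lt_top hffin
end
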